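/- Multiset characterization (necessity): Define Δ_{r,t} := E_r(t+1) − E_r(t) and Ω_r(x) := the multiset {Δ_{r,t} : t < x, t ∈ ℕ}. If {t_r}_{r=0}^{M} is an optimal solution of max Σ_r h_r E_r(t_r) s.t. Σ_r h_r t_r = t_avg, t_r ≥ 0, and S := {r : h_r ≠ 0}, then ⊎_{r∈S} Ω_r(t_r) is a collection of the Σ_{r∈S} ⌈t_r⌉ largest elements of the multiset ⊎_{r∈S} Ω_r(∞). -/

import Mathlib

noncomputable def interp (E : ℕ → ℝ) (x : ℝ) : ℝ :=
  (x - (⌊x⌋ : ℝ)) * E (⌊x⌋.toNat + 1) + (1 - (x - (⌊x⌋ : ℝ))) * E ⌊x⌋.toNat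

lemma delta_anti (E : ℕ → ℝ) (hc : ∀ t, E (t+2) - E (t+1) ≤ E (t+1) - E t) :
    ∀ i j : ℕ, i ≤ j → E (j+1) - E j ≤ E (i+1) - E i := by
  intro i j hij
  induction j with
  | zero => simp [Nat.le_zero.mp hij]
  | succ k ih =>
    rcases Nat.lt_or_ge i (k+1) with hlt | hge
    · exact le_trans (hc k) (ih (Nat.lt_succ_iff.mp hlt))
    · have : i = k+1 := le_antisymm hij hge
      rw [this]

lemma interp_seg (E : ℕ → ℝ) (k : ℕ) (x : ℝ) (h1 : (k:ℝ) ≤ x) (h2 : x ≤ (k:ℝ)+1) :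
    interp E x = E k + (x - (k:ℝ)) * (E (k+1) - E k) := by
  rcases lt_or_eq_of_le h2 with hlt | heq
  · have hf : ⌊x⌋ = (k:ℤ) := by
      rw [Int.floor_eq_iff]
      constructor <;> push_cast <;> linarith
    simp only [interp, hf, Int.toNat_natCast, Int.cast_natCast]
    ring
  · have hf : ⌊x⌋ = (k:ℤ)+1 := by
      rw [heq]; exact_mod_cast Int.floor_intCast ((k:ℤ)+1)
    simp only [interp, hf]
    push_cast
    rw [heq]
    have : ((k:ℤ)+1).toNat = k+1 := by omega
    rw [this]
    ring

lemma sum_support_pair {f : ℕ → ℝ} {N m n : ℕ} (hm : m ∈ Finset.range N)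
    (hn : n ∈ Finset.range N) (hmn : m ≠ n)
    (hf : ∀ r ∈ Finset.range N, r ≠ m → r ≠ n → f r = 0) :
    ∑ r ∈ Finset.range N, f r = f m + f n := by
  rw [← Finset.sum_pair hmn]
  apply (Finset.sum_subset ?_ ?_).symm
  · intro x hx
    simp only [Finset.mem_insert, Finset.mem_singleton] at hx
    rcases hx with h | h <;> subst h <;> assumption
  · intro x hx hx2
    simp only [Finset.mem_insert, Finset.mem_singleton, not_or] at hx2
    exact hf x hx hx2.1 hx2.2

theorem multiset_characterization_necessity
    (M : ℕ) (h : ℕ → ℝ) (hh0 : ∀ r, 0 ≤ h r)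
    (hh1 : ∑ r ∈ Finset.range (M + 1), h r = 1)
    (E : ℕ → ℕ → ℝ)
    (hconc : ∀ r t, E r (t + 2) - E r (t + 1) ≤ E r (t + 1) - E r t)
    (hmono : ∀ r t, E r t ≤ E r (t + 1))
    (hzero : ∀ r, E r 0 = 0)
    (tavg : ℝ) (htavg : 0 ≤ tavg)
    (tr : ℕ → ℝ)
    (hfeas0 : ∀ r, 0 ≤ tr r)
    (hfeas : (∑ r ∈ Finset.range (M + 1), h r * tr r) = tavg)
    (hopt : ∀ s : ℕ → ℝ, (∀ r, 0 ≤ s r) →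
      (∑ r ∈ Finset.range (M + 1), h r * s r) = tavg →
      ∑ r ∈ Finset.range (M + 1), h r * interp (E r) (s r)
        ≤ ∑ r ∈ Finset.range (M + 1), h r * interp (E r) (tr r)) :
    ∀ m ∈ Finset.range (M + 1), ∀ n ∈ Finset.range (M + 1),
      h m ≠ 0 → h n ≠ 0 → ∀ a b : ℕ, (a : ℝ) < tr m → tr n ≤ (b : ℝ) →
        E n (b + 1) - E n b ≤ E m (a + 1) - E m a := by
  intro m hm n hn hm0 hn0 a b ha hb
  have hmpos : 0 < h m := (hh0 m).lt_of_ne (Ne.symm hm0)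
  have hnpos : 0 < h n := (hh0 n).lt_of_ne (Ne.symm hn0)
  have htm_pos : 0 < tr m := lt_of_le_of_lt (Nat.cast_nonneg a) ha
  -- c : one less than the ceiling of tr m
  set c : ℕ := (⌈tr m⌉ - 1).toNat with hc
  have hcz : ((⌈tr m⌉ : ℤ)) ≥ 1 := by
    have : (0:ℤ) < ⌈tr m⌉ := Int.ceil_pos.mpr htm_pos
    omega
  have hcc : (c : ℝ) = (⌈tr m⌉ : ℝ) - 1 := by
    have : ((c : ℤ) : ℝ) = ((⌈tr m⌉ - 1 : ℤ) : ℝ) := by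
      congr 1; omega
    push_cast at this ⊢; linarith
  have hc_lt : (c : ℝ) < tr m := by
    have := Int.ceil_lt_add_one (tr m)
    rw [hcc]; linarith
  have hc_le : tr m ≤ (c : ℝ) + 1 := by
    have := Int.le_ceil (tr m)
    rw [hcc]; linarith
  have hac : a ≤ c := by
    have : (a : ℝ) < (c : ℝ) + 1 := lt_of_lt_of_le ha hc_le
    exact_mod_cast Nat.lt_succ_iff.mp (by exact_mod_cast this)
  -- d : floor of tr n
  set d : ℕ := ⌊tr n⌋.toNat with hd
  have hdd : (d : ℝ) = (⌊tr n⌋ : ℝ) := by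
    have h0 : (0:ℤ) ≤ ⌊tr n⌋ := Int.floor_nonneg.mpr (hfeas0 n)
    have : ((d : ℤ) : ℝ) = ((⌊tr n⌋ : ℤ) : ℝ) := by congr 1; omega
    exact_mod_cast this
  have hd_le : (d : ℝ) ≤ tr n := by rw [hdd]; exact Int.floor_le _
  have hd_lt : tr n < (d : ℝ) + 1 := by rw [hdd]; exact Int.lt_floor_add_one _
  have hdb : d ≤ b := by exact_mod_cast le_trans hd_le hb
  -- reduce to: Δ_n(d) ≤ Δ_m(c)
  have key : E n (d + 1) - E n d ≤ E m (c + 1) - E m c := by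
    rcases eq_or_ne m n with rfl | hmn
    · -- same index: pure concavity, c ≤ d
      have hcd : c ≤ d := by
        have : (c : ℝ) < (d : ℝ) + 1 := lt_of_lt_of_le hc_lt (le_of_lt hd_lt)
        exact_mod_cast Nat.lt_succ_iff.mp (by exact_mod_cast this)
      exact delta_anti (E m) (hconc m) c d hcd
    · -- perturbation argument
      set δ : ℝ := min ((tr m - c) / h n) (((d : ℝ) + 1 - tr n) / h m) with hδ
      have hδpos : 0 < δ := by
        apply lt_min <;> apply div_pos <;> first | linarith | assumption
      have hδ1 : h n * δ ≤ tr m - c := by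
        have := min_le_left ((tr m - c) / h n) (((d : ℝ) + 1 - tr n) / h m)
        calc h n * δ ≤ h n * ((tr m - c) / h n) := by
              apply mul_le_mul_of_nonneg_left this (le_of_lt hnpos)
          _ = tr m - c := by field_simp
      have hδ2 : h m * δ ≤ (d : ℝ) + 1 - tr n := by
        have := min_le_right ((tr m - c) / h n) (((d : ℝ) + 1 - tr n) / h m)
        calc h m * δ ≤ h m * ((((d : ℝ) + 1 - tr n)) / h m) := by
              apply mul_le_mul_of_nonneg_left this (le_of_lt hmpos)
          _ = (d : ℝ) + 1 - tr n := by field_simp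
      have hhnδ : 0 < h n * δ := mul_pos hnpos hδpos
      have hhmδ : 0 < h m * δ := mul_pos hmpos hδpos
      set s : ℕ → ℝ := fun r => if r = m then tr m - h n * δ else
        if r = n then tr n + h m * δ else tr r with hs
      have hsm : s m = tr m - h n * δ := by simp [hs]
      have hsn : s n = tr n + h m * δ := by simp [hs, hmn.symm]
      have hso : ∀ r, r ≠ m → r ≠ n → s r = tr r := by
        intro r h1 h2; simp [hs, h1, h2]
      have hs0 : ∀ r, 0 ≤ s r := by
        intro r
        rcases eq_or_ne r m with rfl | h1
        · rw [hsm]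
          have : (0:ℝ) ≤ c := Nat.cast_nonneg c
          linarith
        rcases eq_or_ne r n with rfl | h2
        · rw [hsn]
          linarith [hfeas0 r, hhmδ]
        · rw [hso r h1 h2]; exact hfeas0 r
      have hsum : (∑ r ∈ Finset.range (M + 1), h r * s r) = tavg := by
        have hdiff : ∑ r ∈ Finset.range (M + 1), (h r * s r - h r * tr r) = 
            (h m * s m - h m * tr m) + (h n * s n - h n * tr n) := by
          apply sum_support_pair hm hn hmn
          intro r _ h1 h2; rw [hso r h1 h2]; ring
        rw [Finset.sum_sub_distrib, hfeas] at hdiff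
        rw [hsm, hsn] at hdiff
        have : ∑ r ∈ Finset.range (M + 1), h r * s r = tavg := by linarith [hdiff]
        exact this
      -- objective values via interp_seg
      have him : interp (E m) (tr m) - interp (E m) (s m) 
          = (h n * δ) * (E m (c+1) - E m c) := by
        rw [interp_seg (E m) c (tr m) (le_of_lt hc_lt) hc_le,
            interp_seg (E m) c (s m) (by rw [hsm]; linarith) (by rw [hsm]; linarith)]
        rw [hsm]; push_cast; ring
      have hin : interp (E n) (s n) - interp (E n) (tr n)
          = (h m * δ) * (E n (d+1) - E n d) := by
        rw [interp_seg (E n) d (tr n) hd_le (le_of_lt hd_lt),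
            interp_seg (E n) d (s n) (by rw [hsn]; linarith) (by rw [hsn]; linarith)]
        rw [hsn]; push_cast; ring
      have hobj := hopt s hs0 hsum
      have hdiff2 : ∑ r ∈ Finset.range (M + 1), 
          (h r * interp (E r) (s r) - h r * interp (E r) (tr r)) = 
          (h m * interp (E m) (s m) - h m * interp (E m) (tr m)) 
          + (h n * interp (E n) (s n) - h n * interp (E n) (tr n)) := by
        apply sum_support_pair hm hn hmn
        intro r _ h1 h2; rw [hso r h1 h2]; ring
      rw [Finset.sum_sub_distrib] at hdiff2
      have h1 : h m * interp (E m) (s m) - h m * interp (E m) (tr m)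
          = -(h m * (h n * δ) * (E m (c+1) - E m c)) := by
        linear_combination (-(h m)) * him
      have h2 : h n * interp (E n) (s n) - h n * interp (E n) (tr n)
          = h m * (h n * δ) * (E n (d+1) - E n d) := by
        linear_combination (h n) * hin
      have hineq : h m * (h n * δ) * (E n (d+1) - E n d)
          ≤ h m * (h n * δ) * (E m (c+1) - E m c) := by linarith
      have hpos : 0 < h m * (h n * δ) := mul_pos hmpos hhnδ
      exact (mul_le_mul_iff_right₀ hpos).mp hineq
  calc E n (b + 1) - E n b ≤ E n (d + 1) - E n d := delta_anti (E n) (hconc n) d b hdb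
    _ ≤ E m (c + 1) - E m c := key
    _ ≤ E m (a + 1) - E m a := delta_anti (E m) (hconc m) a c hac
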